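/- Let $S$ be a set, $\mu$ an ultrafilter on $S$, $(T_s)_{s\in S}$ a family of sets with ultrafilters $\omega_s$ on $T_s$, and $(M_{(s,t)})$ a family of nonempty sets indexed by $\coprod_{s\in S}T_s$. Then the natural map $a : \int_{\coprod_S T_s} M_{(s,t)} \, d\left(\int_S \iota_s\omega_s \, d\mu\right) \to \int_S \left(\int_{T_s} M_{(s,t)} \, d\omega_s \right) d\mu$, sending the class of a tuple $(q_{(s,t)})$ to the class of the tuple of classes $((q_{(s,t)})_t)_s$, is well-defined and bijective. -/
import Mathlib


/-- The integral `∫_S ν_s dμ` of a family of ultrafilters against an ultrafilter,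
characterized by `B ∈ ∫_S ν_s dμ ↔ {s | B ∈ ν s} ∈ μ` (see `mem_UFint`). -/
def UFint {S T : Type*} (μ : Ultrafilter S) (ν : S → Ultrafilter T) : Ultrafilter T :=
  μ.bind ν

lemma mem_UFint {S T : Type*} {μ : Ultrafilter S} {ν : S → Ultrafilter T} {B : Set T} :
    B ∈ UFint μ ν ↔ {s : S | B ∈ ν s} ∈ μ :=
  Filter.mem_bind'

/-- The relation on `∏ x, M x` identifying tuples that agree on a set in `μ`. -/
def UPrel {X : Type*} (μ : Ultrafilter X) (M : X → Type*)
    (p q : ∀ x, M x) : Prop :=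
  {x : X | p x = q x} ∈ μ

/-- The set-theoretic ultraproduct `∫_X M_x dμ = (∏ x, M x)/∼`. -/
def UP {X : Type*} (μ : Ultrafilter X) (M : X → Type*) : Type _ :=
  Quot (UPrel μ M)

lemma UPrel_equivalence {X : Type*} (μ : Ultrafilter X) (M : X → Type*) :
    Equivalence (UPrel μ M) := by
  constructor
  · intro p
    simp only [UPrel]
    exact Filter.univ_mem
  · intro p q h
    simpa only [UPrel, eq_comm] using h
  · intro p q r h1 h2
    have := Filter.inter_mem h1 h2
    exact Filter.mem_of_superset this (fun x ⟨hx1, hx2⟩ => hx1.trans hx2)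

lemma UP_exact {X : Type*} {μ : Ultrafilter X} {M : X → Type*} {p q : ∀ x, M x}
    (h : (Quot.mk (UPrel μ M) p) = Quot.mk (UPrel μ M) q) : UPrel μ M p q :=
  ((UPrel_equivalence μ M).eqvGen_iff).mp (Quot.eqvGen_exact h)

/-- the natural map
`∫_{∐_S T_s} M_{(s,t)} d(∫_S ι_s ω_s dμ) → ∫_S (∫_{T_s} M_{(s,t)} dω_s) dμ`,
sending the class of `(q_{(s,t)})` to the class of the tuple of classes,
is well-defined and bijective. -/
theorem set_is_pseudoalgebra {S : Type*} {T : S → Type*}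
    (μ : Ultrafilter S) (ω : ∀ s, Ultrafilter (T s))
    (M : (Σ s, T s) → Type*) (hne : ∀ p, Nonempty (M p)) :
    ∃ a : UP (UFint μ (fun s => (ω s).map (Sigma.mk s))) M →
        UP μ (fun s => UP (ω s) (fun t => M ⟨s, t⟩)),
      (∀ q : ∀ p, M p,
        a (Quot.mk _ q) = Quot.mk _ (fun s => Quot.mk _ (fun t => q ⟨s, t⟩))) ∧
      Function.Bijective a := by
  set ν : Ultrafilter (Σ s, T s) := UFint μ (fun s => (ω s).map (Sigma.mk s)) with hν
  have key : ∀ q q' : ∀ p, M p, UPrel ν M q q' ↔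
      {s | {t | q ⟨s, t⟩ = q' ⟨s, t⟩} ∈ ω s} ∈ μ := by
    intro q q'
    rw [UPrel, hν, mem_UFint]
    rfl
  refine ⟨Quot.lift (fun q => Quot.mk _ (fun s => Quot.mk _ (fun t => q ⟨s, t⟩))) ?_,
    fun q => rfl, ?_, ?_⟩
  · intro q q' h
    apply Quot.sound
    refine Filter.mem_of_superset ((key q q').mp h) ?_
    intro s hs
    exact Quot.sound hs
  · -- injective
    rintro ⟨q⟩ ⟨q'⟩ h
    apply Quot.sound
    rw [key]
    have h2 := UP_exact h
    refine Filter.mem_of_superset h2 ?_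
    intro s hs
    exact UP_exact hs
  · -- surjective
    rintro ⟨r⟩
    choose q hq using fun s => Quot.exists_rep (r s)
    refine ⟨Quot.mk _ (fun p => q p.1 p.2), ?_⟩
    simp only
    congr 1
    funext s
    exact hq s
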